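/- Let G be an amenable group, let A be a finite set, and let X ⊂ A^G be a strongly irreducible subshift. Equip X with the shift action of G and with the topology (and uniform structure) induced by the prodiscrete topology on A^G. Then every pre-injective continuous G-equivariant map f : X → X is surjective; in particular, every injective continuous G-equivariant self-map of X is surjective. -/

import Mathlib

open scoped Pointwise Uniformity
open Filter

/-- A left Følner net for a group `G`. -/
structure FolnerNet (G : Type*) [Group G] where
  J : Type*
  pre : Preorder J
  dir : IsDirected J fun a b => pre.le a b
  nonempty : Nonempty J
  F : J → Finset G
  F_nonempty : ∀ j, (F j).Nonempty
  folner : ∀ g : G,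
    Filter.Tendsto (fun j => (((g • (F j : Set G)) \ (F j : Set G)).ncard : ℝ) / ((F j).card : ℝ))
      (@Filter.atTop J pre) (nhds 0)

/-- The shift action of `G` on `A^G`, namely `(g • x)(h) = x (g⁻¹ h)`. -/
def shift {G A : Type*} [Group G] (g : G) (x : G → A) : G → A := fun h => x (g⁻¹ * h)

/-- A subset `X ⊆ A^G` is strongly irreducible if there is a finite `Δ ⊆ G` such that
configurations of `X` prescribed on finite sets `Ω₁, Ω₂` with `Ω₁ ∩ Ω₂Δ = ∅` can be glued. -/
def StronglyIrreducible {G A : Type*} [Group G] (X : Set (G → A)) : Prop :=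
  ∃ Δ : Finset G, ∀ Ω₁ Ω₂ : Finset G,
    Disjoint (Ω₁ : Set G) ((Ω₂ : Set G) * (Δ : Set G)) →
    ∀ x₁ ∈ X, ∀ x₂ ∈ X, ∃ x ∈ X, (∀ g ∈ Ω₁, x g = x₁ g) ∧ (∀ g ∈ Ω₂, x g = x₂ g)


set_option linter.unusedSectionVars false
set_option maxHeartbeats 4000000

open Set Topology

theorem myh_uA {A : Type*} [uA : UniformSpace A] (hdisc : uA = ⊥) :
    𝓤 A = 𝓟 (SetRel.id : Set (A × A)) := by rw [show 𝓤 A = 𝓤[uA] from rfl, hdisc]; rfl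

theorem myh_entourage_basis {G A : Type*} [uA : UniformSpace A] (hdisc : uA = ⊥)
    {V : Set ((G → A) × (G → A))} (hV : V ∈ 𝓤 (G → A)) :
    ∃ T : Finset G, ∀ u v : G → A, (∀ g ∈ T, u g = v g) → (u, v) ∈ V := by
  classical
  rw [Pi.uniformity] at hV
  rw [Filter.mem_iInf] at hV
  obtain ⟨I, Ifin, W, hW, rfl⟩ := hV
  refine ⟨Ifin.toFinset, fun u v huv => ?_⟩
  rw [Set.mem_iInter]
  intro i
  have hWi := hW i
  rw [myh_uA hdisc, Filter.mem_comap] at hWi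
  obtain ⟨t, ht, hsub⟩ := hWi
  rw [Filter.mem_principal] at ht
  apply hsub
  have : (u i.1, v i.1) ∈ (SetRel.id : Set (A × A)) := by
    show u i.1 = v i.1
    exact huv i.1 (Ifin.mem_toFinset.2 i.2)
  exact ht this

theorem myh_agree_mem_uniformity {G A : Type*} [uA : UniformSpace A] (hdisc : uA = ⊥)
    (T : Finset G) :
    {p : (G → A) × (G → A) | ∀ g ∈ T, p.1 g = p.2 g} ∈ 𝓤 (G → A) := by
  have h : ∀ g : G, {p : (G → A) × (G → A) | p.1 g = p.2 g} ∈ 𝓤 (G → A) := by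
    intro g
    rw [Pi.uniformity]
    apply Filter.mem_iInf_of_mem g
    rw [myh_uA hdisc]
    have : (fun a : (G → A) × (G → A) => (a.1 g, a.2 g)) ⁻¹' (SetRel.id : Set (A × A))
        = {p : (G → A) × (G → A) | p.1 g = p.2 g} := by
      ext p; simp [SetRel.id]
    rw [← this]
    exact Filter.preimage_mem_comap (Filter.mem_principal_self _)
  have heq : {p : (G → A) × (G → A) | ∀ g ∈ T, p.1 g = p.2 g}
      = ⋂ g ∈ (T : Set G), {p : (G → A) × (G → A) | p.1 g = p.2 g} := by
    ext p; simp
  rw [heq, Filter.biInter_mem T.finite_toSet]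
  exact fun g _ => h g

theorem myh_discrete {A : Type*} [uA : UniformSpace A] (hdisc : uA = ⊥) :
    DiscreteTopology A :=
  ⟨by rw [hdisc]; rfl⟩

noncomputable def myres {G A : Type*} [DecidableEq G] (z : G → A) (E : Finset G) (x : G → A) :
    G → A := fun g => if g ∈ E then x g else z g

section Part2

variable {G A : Type*} [Group G] [Finite A] [uA : UniformSpace A]

/-- closed separation -/
theorem myh_separation (hdisc : uA = ⊥) {Y : Set (G → A)} (hY : IsClosed Y) {z : G → A} (hz : z ∉ Y) :
    ∃ T : Finset G, ∀ y ∈ Y, ∃ g ∈ T, y g ≠ z g := by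
  have hop : Yᶜ ∈ 𝓝 z := hY.isOpen_compl.mem_nhds hz
  rw [UniformSpace.mem_nhds_iff] at hop
  obtain ⟨V, hV, hball⟩ := hop
  obtain ⟨T, hT⟩ := myh_entourage_basis hdisc hV
  refine ⟨T, fun y hy => ?_⟩
  by_contra hcon
  push_neg at hcon
  have : y ∈ UniformSpace.ball z V := hT z y (fun g hg => (hcon g hg).symm)
  exact hball this hy

omit [Group G] in
/-- the closed subshift X is a compact space -/
theorem myh_compact {X : Set (G → A)} (hclosed : IsClosed X) : CompactSpace ↥X :=
  isCompact_iff_compactSpace.mp hclosed.isCompact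

/-- memory set of a continuous map -/
theorem myh_memory (hdisc : uA = ⊥) {X : Set (G → A)} (hclosed : IsClosed X) {f : ↥X → ↥X}
    (hf : Continuous f) :
    ∃ S : Finset G, ∀ x y : ↥X, (∀ s ∈ S, (x : G → A) s = (y : G → A) s) →
      (↑(f x) : G → A) 1 = (↑(f y) : G → A) 1 := by
  haveI := myh_compact hclosed
  have huc : UniformContinuous f := CompactSpace.uniformContinuous_of_continuous hf
  have hV : {p : ↥X × ↥X | (↑p.1 : G → A) 1 = (↑p.2 : G → A) 1} ∈ 𝓤 ↥X := by
    rw [uniformity_subtype]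
    have := myh_agree_mem_uniformity (G := G) hdisc {1}
    refine Filter.mem_comap.2 ⟨_, this, ?_⟩
    intro p hp
    exact hp 1 (Finset.mem_singleton_self 1)
  have hU := huc hV
  rw [uniformity_subtype] at hU
  obtain ⟨W, hW, hWsub⟩ := Filter.mem_comap.1 hU
  obtain ⟨S, hS⟩ := myh_entourage_basis hdisc hW
  refine ⟨S, fun x y hxy => ?_⟩
  have : (x, y) ∈ {q : ↥X × ↥X | (f q.1, f q.2) ∈ {p : ↥X × ↥X | (↑p.1 : G → A) 1 = (↑p.2 : G → A) 1}} := by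
    apply hWsub
    exact hS _ _ hxy
  exact this

end Part2

section Part3

variable {G A : Type*} [Group G] [DecidableEq G] [Finite A] [uA : UniformSpace A]

theorem myh_glue_infinite (hdisc : uA = ⊥) {X : Set (G → A)} (hclosed : IsClosed X)
    {Δ : Finset G}
    (hSI : ∀ Ω₁ Ω₂ : Finset G, Disjoint (Ω₁ : Set G) ((Ω₂ : Set G) * (Δ : Set G)) →
      ∀ x₁ ∈ X, ∀ x₂ ∈ X, ∃ x ∈ X, (∀ g ∈ Ω₁, x g = x₁ g) ∧ (∀ g ∈ Ω₂, x g = x₂ g))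
    (C : Set G) (Ω₂ : Finset G) (hdis : Disjoint C ((Ω₂ : Set G) * (Δ : Set G)))
    {x₁ x₂ : G → A} (hx₁ : x₁ ∈ X) (hx₂ : x₂ ∈ X) :
    ∃ x ∈ X, (∀ g ∈ C, x g = x₁ g) ∧ (∀ g ∈ Ω₂, x g = x₂ g) := by
  classical
  haveI : DiscreteTopology A := ⟨by rw [hdisc]; rfl⟩
  set Z : Finset G → Set (G → A) := fun Ω =>
    {x : G → A | x ∈ X ∧ (∀ g ∈ Ω, g ∈ C → x g = x₁ g) ∧ ∀ g ∈ Ω₂, x g = x₂ g} with hZ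
  have hclosedZ : ∀ Ω, IsClosed (Z Ω) := by
    intro Ω
    have : Z Ω = (X ∩ ⋂ g ∈ Ω.filter (· ∈ C), {x : G → A | x g = x₁ g}) ∩
        ⋂ g ∈ Ω₂, {x : G → A | x g = x₂ g} := by
      ext x
      simp only [hZ, Set.mem_setOf_eq, Set.mem_inter_iff, Set.mem_iInter, Finset.mem_filter]
      constructor
      · rintro ⟨h1, h2, h3⟩
        exact ⟨⟨h1, fun g hg => h2 g hg.1 hg.2⟩, h3⟩
      · rintro ⟨⟨h1, h2⟩, h3⟩
        exact ⟨h1, fun g hg hgC => h2 g ⟨hg, hgC⟩, h3⟩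
    rw [this]
    refine IsClosed.inter (IsClosed.inter hclosed ?_) ?_ <;>
    · refine isClosed_biInter (fun g _ => ?_)
      exact IsClosed.preimage (continuous_apply g) isClosed_singleton
  have hne : ∀ Ω, (Z Ω).Nonempty := by
    intro Ω
    have hd : Disjoint ((Ω.filter (· ∈ C) : Finset G) : Set G) ((Ω₂ : Set G) * (Δ : Set G)) := by
      refine Set.disjoint_left.2 fun g hg => ?_
      have hgC : g ∈ C := by
        simp only [Finset.coe_filter, Set.mem_setOf_eq] at hg
        exact hg.2
      exact fun hmem => Set.disjoint_left.1 hdis hgC hmem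
    obtain ⟨x, hx, h1, h2⟩ := hSI (Ω.filter (· ∈ C)) Ω₂ hd x₁ hx₁ x₂ hx₂
    exact ⟨x, hx, fun g hg hgC => h1 g (Finset.mem_filter.2 ⟨hg, hgC⟩), h2⟩
  have hdir : Directed (· ⊇ ·) Z := by
    intro Ω Ω'
    exact ⟨Ω ∪ Ω',
      fun x hx => ⟨hx.1, fun g hg hgC => hx.2.1 g (Finset.mem_union_left _ hg) hgC, hx.2.2⟩,
      fun x hx => ⟨hx.1, fun g hg hgC => hx.2.1 g (Finset.mem_union_right _ hg) hgC, hx.2.2⟩⟩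
  have hcompact : ∀ Ω, IsCompact (Z Ω) := fun Ω => (hclosedZ Ω).isCompact
  obtain ⟨x, hx⟩ := IsCompact.nonempty_iInter_of_directed_nonempty_isCompact_isClosed
    Z hdir hne hcompact hclosedZ
  simp only [Set.mem_iInter] at hx
  exact ⟨x, (hx ∅).1, fun g hg => (hx {g}).2.1 g (Finset.mem_singleton_self g) hg,
    (hx ∅).2.2⟩

theorem myh_glue_tiles (hdisc : uA = ⊥) {X : Set (G → A)} (hclosed : IsClosed X)
    {Δ : Finset G}
    (hSI : ∀ Ω₁ Ω₂ : Finset G, Disjoint (Ω₁ : Set G) ((Ω₂ : Set G) * (Δ : Set G)) →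
      ∀ x₁ ∈ X, ∀ x₂ ∈ X, ∃ x ∈ X, (∀ g ∈ Ω₁, x g = x₁ g) ∧ (∀ g ∈ Ω₂, x g = x₂ g))
    (Ω₀ : Finset G) :
    ∀ (n : ℕ) (gg : Fin n → G) (C : Set G) (x₁ : G → A), x₁ ∈ X →
    ∀ (xs : Fin n → (G → A)), (∀ i, xs i ∈ X) →
    (∀ i, Disjoint C ((gg i • (Ω₀ * Δ) : Finset G) : Set G)) →
    (∀ i j, i ≠ j → Disjoint ((gg i • Ω₀ : Finset G) : Set G) ((gg j • (Ω₀ * Δ) : Finset G) : Set G)) →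
    ∃ x ∈ X, (∀ g ∈ C, x g = x₁ g) ∧ ∀ i, ∀ g ∈ (gg i • Ω₀ : Finset G), x g = xs i g := by
  intro n
  induction n with
  | zero =>
    intro gg C x₁ hx₁ xs hxs hC hsep
    exact ⟨x₁, hx₁, fun g _ => rfl, fun i => absurd i.2 (by omega)⟩
  | succ n IH =>
    intro gg C x₁ hx₁ xs hxs hC hsep
    obtain ⟨x', hx', hx'C, hx'tiles⟩ := IH (fun i => gg i.castSucc) C x₁ hx₁
      (fun i => xs i.castSucc) (fun i => hxs _)
      (fun i => hC _) (fun i j hij => hsep _ _ (fun h => hij (Fin.castSucc_injective n h)))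
    set C' : Set G := C ∪ ⋃ i : Fin n, ((gg i.castSucc • Ω₀ : Finset G) : Set G) with hC'
    have hkey : ((gg (Fin.last n) • Ω₀ : Finset G) : Set G) * (Δ : Set G)
        = ((gg (Fin.last n) • (Ω₀ * Δ) : Finset G) : Set G) := by
      rw [← Finset.coe_mul, smul_mul_assoc]
    have hdis : Disjoint C' (((gg (Fin.last n) • Ω₀ : Finset G) : Set G) * (Δ : Set G)) := by
      rw [hkey]
      refine Set.disjoint_union_left.2 ⟨hC _, ?_⟩
      refine Set.disjoint_iUnion_left.2 fun i => ?_
      exact hsep i.castSucc (Fin.last n) (Fin.ne_last_of_lt i.castSucc_lt_last)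
    obtain ⟨x, hx, hxC', hxΩ₂⟩ := myh_glue_infinite hdisc hclosed hSI C'
      (gg (Fin.last n) • Ω₀) hdis hx' (hxs (Fin.last n))
    refine ⟨x, hx, ?_, ?_⟩
    · intro g hg
      rw [hxC' g (Set.mem_union_left _ hg)]
      exact hx'C g hg
    · intro i
      refine Fin.lastCases ?_ ?_ i
      · intro g hg
        exact hxΩ₂ g hg
      · intro j g hg
        have hgC' : g ∈ C' := Set.mem_union_right _ (Set.mem_iUnion.2 ⟨j, hg⟩)
        rw [hxC' g hgC']
        exact hx'tiles j g hg

end Part3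

section Part5

variable {G A : Type*} [Group G] [DecidableEq G] [Finite A] [uA : UniformSpace A]

theorem myres_mem_of (z : G → A) (E : Finset G) {W : Set (G → A)} {u : G → A}
    (hu : u ∈ myres z E '' W) : ∀ g ∉ E, u g = z g := by
  obtain ⟨x, _, rfl⟩ := hu
  intro g hg
  simp [myres, hg]

theorem myh_finite_pat (z : G → A) (E : Finset G) (W : Set (G → A)) :
    Finite ↥(myres z E '' W) := by
  have hinj : Function.Injective (fun u : ↥(myres z E '' W) => (fun g : ↥E => (u : G → A) g)) := by
    intro u v huv
    apply Subtype.ext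
    funext g
    by_cases hg : g ∈ E
    · exact congrFun huv ⟨g, hg⟩
    · rw [myres_mem_of z E u.2 g hg, myres_mem_of z E v.2 g hg]
  exact Finite.of_injective _ hinj

theorem myh_homoclinic (hdisc : uA = ⊥) {X : Set (G → A)}
    (hinv : ∀ (g : G), ∀ x ∈ X, shift g x ∈ X)
    (x y : ↥X) (D : Finset G) (hD : ∀ g, g ∉ D → (x : G → A) g = (y : G → A) g) :
    ∀ U ∈ 𝓤 ↥X, ∃ Ω : Finset G, ∀ g : G, g ∉ Ω →
      ((⟨shift g ↑x, hinv g ↑x x.2⟩ : ↥X), (⟨shift g ↑y, hinv g ↑y y.2⟩ : ↥X)) ∈ U := by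
  intro U hU
  rw [uniformity_subtype] at hU
  obtain ⟨V, hV, hsub⟩ := Filter.mem_comap.1 hU
  obtain ⟨T, hT⟩ := myh_entourage_basis hdisc hV
  refine ⟨T * D⁻¹, fun g hg => ?_⟩
  apply hsub
  show (shift g ↑x, shift g ↑y) ∈ V
  apply hT
  intro h hh
  show (x : G → A) (g⁻¹ * h) = (y : G → A) (g⁻¹ * h)
  apply hD
  intro hd
  apply hg
  have : g = h * (g⁻¹ * h)⁻¹ := by group
  rw [this]
  exact Finset.mul_mem_mul hh (Finset.inv_mem_inv hd)

theorem myh_local {X : Set (G → A)}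
    (hinv : ∀ (g : G), ∀ x ∈ X, shift g x ∈ X) {f : ↥X → ↥X}
    (hequi : ∀ (g : G) (x : ↥X),
      f ⟨shift g ↑x, hinv g ↑x x.2⟩ = ⟨shift g ↑(f x), hinv g ↑(f x) (f x).2⟩)
    {S : Finset G}
    (hS : ∀ x y : ↥X, (∀ s ∈ S, (x : G → A) s = (y : G → A) s) →
      (↑(f x) : G → A) 1 = (↑(f y) : G → A) 1)
    (x y : ↥X) (g : G) (hxy : ∀ s ∈ S, (x : G → A) (g * s) = (y : G → A) (g * s)) :
    (↑(f x) : G → A) g = (↑(f y) : G → A) g := by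
  have hx' := hequi g⁻¹ x
  have hy' := hequi g⁻¹ y
  have h1 : (↑(f (⟨shift g⁻¹ ↑x, hinv g⁻¹ ↑x x.2⟩ : ↥X)) : G → A) 1 = (↑(f x) : G → A) g := by
    rw [hx']
    show shift g⁻¹ (↑(f x)) 1 = (↑(f x) : G → A) g
    simp [shift]
  have h2 : (↑(f (⟨shift g⁻¹ ↑y, hinv g⁻¹ ↑y y.2⟩ : ↥X)) : G → A) 1 = (↑(f y) : G → A) g := by
    rw [hy']
    show shift g⁻¹ (↑(f y)) 1 = (↑(f y) : G → A) g
    simp [shift]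
  rw [← h1, ← h2]
  apply hS
  intro s hs
  show (x : G → A) ((g⁻¹)⁻¹ * s) = (y : G → A) ((g⁻¹)⁻¹ * s)
  rw [inv_inv]
  exact hxy s hs

/-- counting inequality from restriction -/
theorem myh_count_restrict (z : G → A) {E E' : Finset G} (hEE' : E ⊆ E') (W : Set (G → A)) :
    Nat.card ↥(myres z E' '' W) ≤ Nat.card ↥(myres z E '' W) * Nat.card A ^ (E' \ E).card := by
  haveI := myh_finite_pat z E' W
  haveI := myh_finite_pat z E W
  have key : ∀ u : ↥(myres z E' '' W), myres z E (u : G → A) ∈ myres z E '' W := by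
    rintro ⟨u, w, hw, rfl⟩
    refine ⟨w, hw, ?_⟩
    funext g
    by_cases hg : g ∈ E
    · simp [myres, hg, hEE' hg]
    · simp [myres, hg]
  set Φ : ↥(myres z E' '' W) → ↥(myres z E '' W) × (↥(E' \ E : Finset G) → A) :=
    fun u => (⟨myres z E (u : G → A), key u⟩, fun g => (u : G → A) g) with hΦ
  have hinj : Function.Injective Φ := by
    intro u v huv
    rw [hΦ, Prod.mk.injEq] at huv
    apply Subtype.ext
    funext g
    by_cases hg : g ∈ E'
    · by_cases hgE : g ∈ E
      · have := congrFun (congrArg Subtype.val huv.1) g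
        simpa [myres, hgE] using this
      · have := congrFun huv.2 ⟨g, Finset.mem_sdiff.2 ⟨hg, hgE⟩⟩
        exact this
    · rw [myres_mem_of z E' u.2 g hg, myres_mem_of z E' v.2 g hg]
  calc Nat.card ↥(myres z E' '' W) ≤
      Nat.card (↥(myres z E '' W) × (↥(E' \ E : Finset G) → A)) :=
        Nat.card_le_card_of_injective Φ hinj
    _ = Nat.card ↥(myres z E '' W) * Nat.card A ^ (E' \ E).card := by
        rw [Nat.card_prod, Nat.card_fun, Nat.card_eq_finsetCard]

theorem myh_count_preinj (hdisc : uA = ⊥) {X : Set (G → A)} (hclosed : IsClosed X)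
    (hinv : ∀ (g : G), ∀ x ∈ X, shift g x ∈ X)
    {Δ : Finset G}
    (hSI : ∀ Ω₁ Ω₂ : Finset G, Disjoint (Ω₁ : Set G) ((Ω₂ : Set G) * (Δ : Set G)) →
      ∀ x₁ ∈ X, ∀ x₂ ∈ X, ∃ x ∈ X, (∀ g ∈ Ω₁, x g = x₁ g) ∧ (∀ g ∈ Ω₂, x g = x₂ g))
    {f : ↥X → ↥X}
    (hequi : ∀ (g : G) (x : ↥X),
      f ⟨shift g ↑x, hinv g ↑x x.2⟩ = ⟨shift g ↑(f x), hinv g ↑(f x) (f x).2⟩)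
    {S : Finset G}
    (hS : ∀ x y : ↥X, (∀ s ∈ S, (x : G → A) s = (y : G → A) s) →
      (↑(f x) : G → A) 1 = (↑(f y) : G → A) 1)
    (hpre : ∀ x y : ↥X,
        (∀ U ∈ 𝓤 ↥X, ∃ Ω : Finset G, ∀ g : G, g ∉ Ω →
          ((⟨shift g ↑x, hinv g ↑x x.2⟩ : ↥X), (⟨shift g ↑y, hinv g ↑y y.2⟩ : ↥X)) ∈ U) →
        f x = f y → x = y)
    {z : G → A} (hzX : z ∈ X) (F : Finset G) :
    Nat.card ↥(myres z F '' X) ≤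
      Nat.card ↥(myres z (F * (Δ * S⁻¹)) '' (Subtype.val '' (Set.range f))) := by
  haveI := myh_finite_pat z (F * (Δ * S⁻¹)) (Subtype.val '' (Set.range f))
  have hsel : ∀ q : ↥(myres z F '' X), ∃ xq : G → A, xq ∈ X ∧
      (∀ g ∈ F, xq g = (q : G → A) g) ∧ (∀ g, g ∉ F * Δ → xq g = z g) := by
    rintro ⟨q, x', hx', rfl⟩
    have hdis : Disjoint ((↑(F * Δ) : Set G)ᶜ) ((F : Set G) * (Δ : Set G)) := by
      rw [← Finset.coe_mul]
      exact disjoint_compl_left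
    obtain ⟨x, hxX, hC, hF⟩ := myh_glue_infinite hdisc hclosed hSI
      ((↑(F * Δ) : Set G)ᶜ) F hdis hzX hx'
    refine ⟨x, hxX, fun g hg => ?_, fun g hg => ?_⟩
    · rw [hF g hg]
      simp [myres, hg]
    · exact hC g (by rwa [Set.mem_compl_iff, Finset.mem_coe])
  choose xq hqX hqF hqout using hsel
  set Φ : ↥(myres z F '' X) → ↥(myres z (F * (Δ * S⁻¹)) '' (Subtype.val '' (Set.range f))) :=
    fun q => ⟨myres z (F * (Δ * S⁻¹)) ↑(f ⟨xq q, hqX q⟩),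
      ⟨↑(f ⟨xq q, hqX q⟩), ⟨f ⟨xq q, hqX q⟩, ⟨⟨xq q, hqX q⟩, rfl⟩, rfl⟩, rfl⟩⟩ with hΦ
  have hinj : Function.Injective Φ := by
    intro q q' hqq
    have hval : myres z (F * (Δ * S⁻¹)) ↑(f ⟨xq q, hqX q⟩)
        = myres z (F * (Δ * S⁻¹)) ↑(f ⟨xq q', hqX q'⟩) := congrArg Subtype.val hqq
    -- step A : the images agree everywhere
    have hA : (↑(f ⟨xq q, hqX q⟩) : G → A) = ↑(f ⟨xq q', hqX q'⟩) := by
      funext g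
      by_cases hg : g ∈ F * (Δ * S⁻¹)
      · have := congrFun hval g
        simpa [myres, hg] using this
      · -- off the enlarged window both agree with the image of z
        have hmem : ∀ s ∈ S, g * s ∉ F * Δ := by
          intro s hs hgs
          apply hg
          rw [Finset.mem_mul] at hgs
          obtain ⟨a, ha, b, hb, hab⟩ := hgs
          have : g = a * (b * s⁻¹) := by rw [← mul_assoc, hab]; group
          rw [this, ← mul_assoc]
          rw [mul_assoc]
          exact Finset.mul_mem_mul ha (Finset.mul_mem_mul hb (Finset.inv_mem_inv hs))
        have e1 : (↑(f ⟨xq q, hqX q⟩) : G → A) g = (↑(f ⟨z, hzX⟩) : G → A) g := by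
          apply myh_local hinv hequi hS
          intro s hs
          exact hqout q (g * s) (hmem s hs)
        have e2 : (↑(f ⟨xq q', hqX q'⟩) : G → A) g = (↑(f ⟨z, hzX⟩) : G → A) g := by
          apply myh_local hinv hequi hS
          intro s hs
          exact hqout q' (g * s) (hmem s hs)
        rw [e1, e2]
    have hB : f ⟨xq q, hqX q⟩ = f ⟨xq q', hqX q'⟩ := Subtype.ext hA
    have hhom := myh_homoclinic hdisc hinv ⟨xq q, hqX q⟩ ⟨xq q', hqX q'⟩ (F * Δ)
      (fun g hg => by show xq q g = xq q' g; rw [hqout q g hg, hqout q' g hg])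
    have hC := hpre _ _ hhom hB
    have hxx : xq q = xq q' := congrArg Subtype.val hC
    apply Subtype.ext
    have hq : (q : G → A) = myres z F (xq q) := by
      funext g
      by_cases hg : g ∈ F
      · simp [myres, hg, hqF q g hg]
      · simp [myres, hg, myres_mem_of z F q.2 g hg]
    have hq' : (q' : G → A) = myres z F (xq q') := by
      funext g
      by_cases hg : g ∈ F
      · simp [myres, hg, hqF q' g hg]
      · simp [myres, hg, myres_mem_of z F q'.2 g hg]
    rw [hq, hq', hxx]
  exact Nat.card_le_card_of_injective Φ hinj

theorem myh_count_tiles (hdisc : uA = ⊥) {X : Set (G → A)} (hclosed : IsClosed X)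
    (hinv : ∀ (g : G), ∀ x ∈ X, shift g x ∈ X)
    {Δ : Finset G} (h1Δ : (1 : G) ∈ Δ)
    (hSI : ∀ Ω₁ Ω₂ : Finset G, Disjoint (Ω₁ : Set G) ((Ω₂ : Set G) * (Δ : Set G)) →
      ∀ x₁ ∈ X, ∀ x₂ ∈ X, ∃ x ∈ X, (∀ g ∈ Ω₁, x g = x₁ g) ∧ (∀ g ∈ Ω₂, x g = x₂ g))
    {Y : Set (G → A)} (hYX : Y ⊆ X)
    {z : G → A} (hzX : z ∈ X) {Ω₀ : Finset G}
    (havoid : ∀ y ∈ Y, ∀ g : G, ∃ h ∈ Ω₀, y (g * h) ≠ z h)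
    (F : Finset G) (t m : ℕ) (gs : Fin t × Fin m → G)
    (hgsF : ∀ i, (gs i • (Ω₀ * Δ) : Finset G) ⊆ F)
    (hsep : ∀ i j, i ≠ j →
      Disjoint ((gs i • Ω₀ : Finset G) : Set G) ((gs j • (Ω₀ * Δ) : Finset G) : Set G)) :
    Nat.card ↥(myres z F '' Y) * m ^ t ≤
      Nat.card ↥(myres z F '' X) * (Nat.card A ^ (Ω₀ * Δ).card) ^ t := by
  haveI := myh_finite_pat z F Y
  haveI := myh_finite_pat z F X
  have hqsel : ∀ q : ↥(myres z F '' Y), ∃ y, y ∈ Y ∧ myres z F y = (q : G → A) := by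
    rintro ⟨q, y, hy, rfl⟩
    exact ⟨y, hy, rfl⟩
  choose yq hqY hqeq using hqsel
  -- the glued configurations
  have hglue : ∀ (q : ↥(myres z F '' Y)) (σ : Fin t → Fin m), ∃ x, x ∈ X ∧
      (∀ g ∈ ((F : Set G) \ ⋃ j : Fin t, ((gs (j, σ j) • (Ω₀ * Δ) : Finset G) : Set G)),
        x g = yq q g) ∧
      (∀ j : Fin t, ∀ g ∈ (gs (j, σ j) • Ω₀ : Finset G), x g = shift (gs (j, σ j)) z g) := by
    intro q σ
    obtain ⟨x, hxX, hxC, hxT⟩ := myh_glue_tiles hdisc hclosed hSI Ω₀ t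
      (fun j => gs (j, σ j))
      ((F : Set G) \ ⋃ j : Fin t, ((gs (j, σ j) • (Ω₀ * Δ) : Finset G) : Set G))
      (yq q) (hYX (hqY q))
      (fun j => shift (gs (j, σ j)) z) (fun j => hinv _ _ hzX)
      (fun j => Set.disjoint_left.2 fun g hg hmem => hg.2 (Set.mem_iUnion.2 ⟨j, hmem⟩))
      (fun i j hij => hsep (i, σ i) (j, σ j)
        (fun hEq => hij (congrArg Prod.fst hEq)))
    exact ⟨x, hxX, hxC, hxT⟩
  choose xh hxhX hxhC hxhT using hglue
  -- membership of tiles in F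
  have htileF : ∀ (i : Fin t × Fin m) (h : G), h ∈ Ω₀ → gs i * h ∈ F := by
    intro i h hh
    apply hgsF i
    have : h ∈ Ω₀ * Δ := by
      have := Finset.mul_mem_mul hh h1Δ
      rwa [mul_one] at this
    have := Finset.smul_mem_smul_finset (a := gs i) this
    rwa [smul_eq_mul] at this
  -- key1 : glued pattern shows the missing pattern at selected tiles
  have key1 : ∀ (q : ↥(myres z F '' Y)) (σ : Fin t → Fin m) (j : Fin t), ∀ h ∈ Ω₀,
      myres z F (xh q σ) (gs (j, σ j) * h) = z h := by
    intro q σ j h hh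
    have hmemF : gs (j, σ j) * h ∈ F := htileF _ h hh
    have hmemT : gs (j, σ j) * h ∈ (gs (j, σ j) • Ω₀ : Finset G) := by
      have := Finset.smul_mem_smul_finset (a := gs (j, σ j)) hh
      rwa [smul_eq_mul] at this
    have := hxhT q σ j _ hmemT
    simp only [myres, hmemF, if_pos]
    rw [this]
    simp [shift]
  -- key2 : glued pattern does not show it at non-selected tiles
  have key2 : ∀ (q : ↥(myres z F '' Y)) (σ : Fin t → Fin m) (j : Fin t) (μ : Fin m),
      μ ≠ σ j → ∃ h ∈ Ω₀, myres z F (xh q σ) (gs (j, μ) * h) ≠ z h := by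
    intro q σ j μ hμ
    obtain ⟨h, hh, hne⟩ := havoid (yq q) (hqY q) (gs (j, μ))
    refine ⟨h, hh, ?_⟩
    have hmemF : gs (j, μ) * h ∈ F := htileF _ h hh
    have hin : gs (j, μ) * h ∈ (gs (j, μ) • Ω₀ : Finset G) := by
      have := Finset.smul_mem_smul_finset (a := gs (j, μ)) hh
      rwa [smul_eq_mul] at this
    have hC : gs (j, μ) * h ∈
        ((F : Set G) \ ⋃ i : Fin t, ((gs (i, σ i) • (Ω₀ * Δ) : Finset G) : Set G)) := by
      refine ⟨hmemF, ?_⟩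
      rw [Set.mem_iUnion]
      rintro ⟨i, hi⟩
      have hne' : (j, μ) ≠ (i, σ i) := by
        intro hEq
        rcases Prod.mk.injEq .. ▸ hEq with h'
        have h1 := congrArg Prod.fst hEq
        have h2 := congrArg Prod.snd hEq
        simp only at h1 h2
        subst h1
        exact hμ h2
      exact Set.disjoint_left.1 (hsep _ _ hne') hin hi
    have := hxhC q σ _ hC
    simp only [myres, hmemF, if_pos]
    rw [this]
    exact hne
  -- the injection
  set Ψ : ↥(myres z F '' Y) × (Fin t → Fin m) →
      ↥(myres z F '' X) × (Fin t → (↥((Ω₀ * Δ) : Finset G) → A)) :=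
    fun p => (⟨myres z F (xh p.1 p.2), ⟨xh p.1 p.2, hxhX p.1 p.2, rfl⟩⟩,
      fun j d => yq p.1 (gs (j, p.2 j) * (d : G))) with hΨ
  have hinj : Function.Injective Ψ := by
    rintro ⟨q, σ⟩ ⟨q', σ'⟩ hEq
    rw [hΨ, Prod.mk.injEq] at hEq
    obtain ⟨h1, h2⟩ := hEq
    have hr : myres z F (xh q σ) = myres z F (xh q' σ') := congrArg Subtype.val h1
    -- first : σ = σ'
    have hσ : σ = σ' := by
      funext j
      by_contra hne
      obtain ⟨h, hh, hne2⟩ := key2 q σ j (σ' j) (Ne.symm hne)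
      have := key1 q' σ' j h hh
      rw [← hr] at this
      exact hne2 this
    subst hσ
    -- then : q = q'
    have hq : q = q' := by
      apply Subtype.ext
      funext g
      by_cases hgF : g ∈ F
      · have hq1 : (q : G → A) g = yq q g := by rw [← hqeq q]; simp [myres, hgF]
        have hq2 : (q' : G → A) g = yq q' g := by rw [← hqeq q']; simp [myres, hgF]
        rw [hq1, hq2]
        by_cases hgU : g ∈ ⋃ j : Fin t, ((gs (j, σ j) • (Ω₀ * Δ) : Finset G) : Set G)
        · obtain ⟨j, hj⟩ := Set.mem_iUnion.1 hgU
          rw [Finset.mem_coe, Finset.mem_smul_finset] at hj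
          obtain ⟨d, hd, hgd⟩ := hj
          rw [smul_eq_mul] at hgd
          have := congrFun (congrFun h2 j) ⟨d, hd⟩
          simp only at this
          rw [← hgd]
          exact this
        · have e1 := hxhC q σ g ⟨hgF, hgU⟩
          have e2 := hxhC q' σ g ⟨hgF, hgU⟩
          have e3 := congrFun hr g
          simp only [myres, hgF, if_pos] at e3
          rw [← e1, ← e2, e3]
      · rw [myres_mem_of z F q.2 g hgF, myres_mem_of z F q'.2 g hgF]
    rw [hq]
  have hcard := Nat.card_le_card_of_injective Ψ hinj
  rw [Nat.card_prod, Nat.card_prod, Nat.card_fun, Nat.card_fun, Nat.card_fun,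
    Nat.card_eq_finsetCard] at hcard
  simpa [Nat.card_eq_fintype_card] using hcard

end Part5

section PartG

variable {G A : Type*} [Group G] [DecidableEq G]

/-- greedy choice of a separated subfamily -/
theorem myh_greedy (K : Finset G) (h1 : (1 : G) ∈ K) (hKsymm : ∀ k ∈ K, k⁻¹ ∈ K)
    (I : Finset G) : ∃ J : Finset G, J ⊆ I ∧
      (∀ g ∈ J, ∀ g' ∈ J, g ≠ g' → g⁻¹ * g' ∉ K) ∧ I.card ≤ J.card * K.card := by
  induction I using Finset.strongInductionOn with
  | _ I IH =>
    rcases I.eq_empty_or_nonempty with rfl | ⟨g, hg⟩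
    · exact ⟨∅, Finset.Subset.refl _, by simp, by simp⟩
    · have hgK : g ∈ g • K := by
        rw [Finset.mem_smul_finset]
        exact ⟨1, h1, mul_one g⟩
      set I' := I \ (g • K) with hI'
      have hss : I' ⊂ I := by
        refine Finset.ssubset_iff_of_subset (Finset.sdiff_subset) |>.2 ⟨g, hg, ?_⟩
        simp [hI', hgK]
      obtain ⟨J', hJ'sub, hJ'sep, hJ'card⟩ := IH I' hss
      have hgJ' : g ∉ J' := fun h => by
        have := hJ'sub h
        rw [hI', Finset.mem_sdiff] at this
        exact this.2 hgK
      refine ⟨insert g J', ?_, ?_, ?_⟩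
      · intro x hx
        rcases Finset.mem_insert.1 hx with rfl | hx
        · exact hg
        · exact Finset.sdiff_subset (hJ'sub hx)
      · intro x hx y hy hxy
        have hnot : ∀ u ∈ J', g⁻¹ * u ∉ K := by
          intro u hu hk
          have : u ∈ g • K := by
            rw [Finset.mem_smul_finset]
            exact ⟨g⁻¹ * u, hk, by simp [smul_eq_mul, mul_inv_cancel_left]⟩
          have := hJ'sub hu
          rw [hI', Finset.mem_sdiff] at this
          exact this.2 ‹u ∈ g • K›
        rcases Finset.mem_insert.1 hx with hx' | hx'
        · subst hx'
          rcases Finset.mem_insert.1 hy with hy' | hy'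
          · exact absurd hy'.symm hxy
          · exact hnot y hy'
        · rcases Finset.mem_insert.1 hy with hy' | hy'
          · subst hy'
            intro hk
            have h2 := hKsymm _ hk
            rw [mul_inv_rev, inv_inv] at h2
            exact hnot x hx' h2
          · exact hJ'sep x hx' y hy' hxy
      · have hcover : I ⊆ I' ∪ g • K := by
          intro x hx
          rw [Finset.mem_union, hI', Finset.mem_sdiff]
          by_cases h : x ∈ g • K
          · exact Or.inr h
          · exact Or.inl ⟨hx, h⟩
        calc I.card ≤ (I' ∪ g • K).card := Finset.card_le_card hcover
          _ ≤ I'.card + (g • K).card := Finset.card_union_le _ _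
          _ ≤ J'.card * K.card + K.card := by
              rw [Finset.card_smul_finset]
              exact Nat.add_le_add_right hJ'card _
          _ = (insert g J').card * K.card := by
              rw [Finset.card_insert_of_notMem hgJ', add_mul, one_mul]


end PartG

section Part6

variable {G : Type*} [Group G] [DecidableEq G]

/-- translate between right translates of `B⁻¹` and left translates of `B` -/
theorem myh_inv_translate (B : Finset G) (v : G) :
    ((B⁻¹ * {v}) \ B⁻¹).card = (((v⁻¹ • B) : Finset G) \ B).card := by
  apply Finset.card_bij (fun x _ => x⁻¹)
  · intro x hx
    rw [Finset.mem_sdiff] at hx ⊢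
    obtain ⟨h1, h2⟩ := hx
    rw [Finset.mem_mul] at h1
    obtain ⟨a, ha, b, hb, hab⟩ := h1
    rw [Finset.mem_singleton] at hb
    subst hb
    obtain ⟨cc, hcc, hcceq⟩ := Finset.mem_inv.1 ha
    constructor
    · rw [Finset.mem_smul_finset]
      refine ⟨cc, hcc, ?_⟩
      rw [smul_eq_mul, ← hab, ← hcceq]
      group
    · intro hmem
      exact h2 (by rw [← inv_inv x]; exact Finset.inv_mem_inv hmem)
  · intro x hx y hy hxy
    exact inv_injective hxy
  · intro y hy
    rw [Finset.mem_sdiff] at hy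
    obtain ⟨h1, h2⟩ := hy
    rw [Finset.mem_smul_finset] at h1
    obtain ⟨cc, hcc, hcceq⟩ := h1
    rw [smul_eq_mul] at hcceq
    refine ⟨y⁻¹, ?_, inv_inv y⟩
    rw [Finset.mem_sdiff]
    constructor
    · rw [Finset.mem_mul]
      refine ⟨cc⁻¹, Finset.inv_mem_inv hcc, v, Finset.mem_singleton_self v, ?_⟩
      rw [← hcceq]; group
    · intro hmem
      obtain ⟨dd, hdd, hddeq⟩ := Finset.mem_inv.1 hmem
      apply h2
      have : y = dd := by rw [← inv_inv y, ← hddeq, inv_inv]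
      rwa [this]

/-- boundary bound : elements of `F` whose collar exits `F` are few -/
theorem myh_boundary_filter (F : Finset G) (D : Finset G) :
    (F \ F.filter (fun g => (g • D : Finset G) ⊆ F)).card ≤
      ∑ d ∈ D, ((F * {d}) \ F).card := by
  classical
  rw [← Finset.card_sigma]
  have hsel : ∀ g ∈ F \ F.filter (fun g => (g • D : Finset G) ⊆ F),
      ∃ d ∈ D, g * d ∉ F := by
    intro g hg
    rw [Finset.mem_sdiff, Finset.mem_filter] at hg
    obtain ⟨hgF, hgI⟩ := hg
    by_contra hcon
    push_neg at hcon
    apply hgI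
    refine ⟨hgF, fun x hx => ?_⟩
    rw [Finset.mem_smul_finset] at hx
    obtain ⟨d, hd, rfl⟩ := hx
    rw [smul_eq_mul]
    exact hcon d hd
  choose dsel hdsel1 hdsel2 using hsel
  apply Finset.card_le_card_of_injOn (fun g =>
    if hg : g ∈ F \ F.filter (fun g => (g • D : Finset G) ⊆ F)
    then ⟨dsel g hg, g * dsel g hg⟩ else ⟨1, 1⟩)
  · intro g hg
    simp only [Finset.mem_coe, dif_pos (Finset.mem_coe.1 hg)]
    rw [Finset.mem_sigma]
    refine ⟨hdsel1 g hg, ?_⟩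
    rw [Finset.mem_sdiff]
    constructor
    · apply Finset.mul_mem_mul
      · exact (Finset.mem_sdiff.1 hg).1
      · exact Finset.mem_singleton_self _
    · exact hdsel2 g hg
  · intro g hg g' hg' hEq
    rw [Finset.mem_coe] at hg hg'
    simp only [dif_pos hg, dif_pos hg'] at hEq
    have h1 : dsel g hg = dsel g' hg' := congrArg Sigma.fst hEq
    have h2 : g * dsel g hg = g' * dsel g' hg' := by
      have := congrArg Sigma.snd hEq
      simpa using this
    rw [h1] at h2
    exact mul_right_cancel h2

/-- boundary bound for products -/
theorem myh_boundary_mul (F : Finset G) (D : Finset G) :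
    ((F * D) \ F).card ≤ ∑ d ∈ D, ((F * {d}) \ F).card := by
  classical
  rw [← Finset.card_sigma]
  have hsel : ∀ g ∈ (F * D) \ F, ∃ d ∈ D, g ∈ (F * {d}) \ F := by
    intro g hg
    rw [Finset.mem_sdiff] at hg
    obtain ⟨h1, h2⟩ := hg
    rw [Finset.mem_mul] at h1
    obtain ⟨a, ha, b, hb, hab⟩ := h1
    refine ⟨b, hb, ?_⟩
    rw [Finset.mem_sdiff]
    refine ⟨?_, h2⟩
    rw [Finset.mem_mul]
    exact ⟨a, ha, b, Finset.mem_singleton_self b, hab⟩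
  choose dsel hdsel1 hdsel2 using hsel
  apply Finset.card_le_card_of_injOn (fun g =>
    if hg : g ∈ (F * D) \ F then ⟨dsel g hg, g⟩ else ⟨1, 1⟩)
  · intro g hg
    simp only [Finset.mem_coe, dif_pos (Finset.mem_coe.1 hg)]; rw [Finset.mem_sigma]
    exact ⟨hdsel1 g hg, hdsel2 g hg⟩
  · intro g hg g' hg' hEq
    rw [Finset.mem_coe] at hg hg'
    simp only [dif_pos hg, dif_pos hg'] at hEq
    have := congrArg Sigma.snd hEq
    simpa using this

/-- if all translates by `R` distinct elements barely move `F`, then `F` is large -/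
theorem myh_size (F : Finset G) (hF : F.Nonempty) (R : ℕ) (u : ℕ → G)
    (hu : Function.Injective u)
    (hcond : ∀ r < R, (((u r • F) : Finset G) \ F).card = 0) :
    R ≤ F.card := by
  classical
  have hfix : ∀ r < R, (u r • F : Finset G) = F := by
    intro r hr
    have hsub : (u r • F : Finset G) ⊆ F := by
      intro x hx
      by_contra hxF
      have hmem : x ∈ ((u r • F) : Finset G) \ F := Finset.mem_sdiff.2 ⟨hx, hxF⟩
      have hpos := Finset.card_pos.2 ⟨x, hmem⟩
      rw [hcond r hr] at hpos
      exact lt_irrefl 0 hpos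
    exact Finset.eq_of_subset_of_card_le hsub (by rw [Finset.card_smul_finset])
  obtain ⟨x, hx⟩ := hF
  have hmem : ∀ r < R, u r * x ∈ F := by
    intro r hr
    rw [← hfix r hr]
    have := Finset.smul_mem_smul_finset (a := u r) hx
    rwa [smul_eq_mul] at this
  have hinj : Set.InjOn (fun r => u r * x) ↑(Finset.range R) := by
    intro r _ r' _ hEq
    exact hu (mul_right_cancel hEq)
  calc R = (Finset.range R).card := (Finset.card_range R).symm
    _ ≤ F.card := Finset.card_le_card_of_injOn _
        (fun r hr => hmem r (Finset.mem_range.1 hr)) hinj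

end Part6

section Part7

variable {G : Type*} [Group G] [DecidableEq G]

theorem myh_folner_select (net : FolnerNet G) (V : Finset G) (Zm : ℕ) :
    ∃ j : net.J, ∀ v ∈ V,
      Zm * ((((v • net.F j) : Finset G)) \ net.F j).card < (net.F j).card := by
  letI := net.pre
  haveI := net.dir
  haveI := net.nonempty
  haveI : (atTop : Filter net.J).NeBot := Filter.atTop_neBot_iff.mpr ⟨net.nonempty, net.dir⟩
  have hev : ∀ v ∈ V, ∀ᶠ j in atTop,
      Zm * ((((v • net.F j) : Finset G)) \ net.F j).card < (net.F j).card := by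
    intro v _
    have htt := net.folner v
    have hev0 := htt.eventually_lt_const (show (0:ℝ) < 1/(Zm+1) by positivity)
    refine hev0.mono fun j hj => ?_
    have hcardpos : 0 < (net.F j).card := Finset.card_pos.2 (net.F_nonempty j)
    have hncard : ((v • (net.F j : Set G)) \ (net.F j : Set G)).ncard
        = (((v • net.F j) : Finset G) \ net.F j).card := by
      rw [← Finset.coe_smul_finset, ← Finset.coe_sdiff, Set.ncard_coe_finset]
    rw [hncard] at hj
    set d := (((v • net.F j) : Finset G) \ net.F j).card
    set cF := (net.F j).card
    rw [div_lt_div_iff₀ (by exact_mod_cast hcardpos) (by positivity)] at hj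
    have hr : ((Zm * d : ℕ) : ℝ) < (cF : ℝ) := by
      push_cast
      nlinarith [Nat.cast_nonneg (α := ℝ) d]
    exact_mod_cast hr
  have hall := (Filter.eventually_all_finset V).2 hev
  exact hall.exists

theorem myh_sep_disjoint {Ω₀ Δ : Finset G} {g g' : G}
    (hK : g⁻¹ * g' ∉ (Ω₀ * Δ * Ω₀⁻¹) ∪ (Ω₀ * Δ * Ω₀⁻¹)⁻¹) :
    Disjoint ((g • Ω₀ : Finset G) : Set G) ((g' • (Ω₀ * Δ) : Finset G) : Set G) := by
  rw [Set.disjoint_left]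
  rintro x hx hx'
  rw [Finset.mem_coe, Finset.mem_smul_finset] at hx hx'
  obtain ⟨ω, hω, hωeq⟩ := hx
  obtain ⟨u, hu, hueq⟩ := hx'
  rw [smul_eq_mul] at hωeq hueq
  apply hK
  apply Finset.mem_union_right
  have hmem : u * ω⁻¹ ∈ Ω₀ * Δ * Ω₀⁻¹ := Finset.mul_mem_mul hu (Finset.inv_mem_inv hω)
  have := Finset.inv_mem_inv hmem
  have heq : (u * ω⁻¹)⁻¹ = g⁻¹ * g' := by
    have : g * ω = g' * u := by rw [hωeq, hueq]
    rw [mul_inv_rev, inv_inv]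
    rw [show g' = g * ω * u⁻¹ by rw [this]; group]
    group
  rwa [heq] at this

end Part7


/-- Myhill property for strongly irreducible subshifts over amenable groups:
every pre-injective continuous `G`-equivariant self-map of `X` is surjective;
in particular every injective one is surjective. -/
theorem myhill_strongly_irreducible {G A : Type*} [Group G] [Finite A]
    [uA : UniformSpace A] (hdisc : uA = ⊥)
    (hamen : Nonempty (FolnerNet G))
    (X : Set (G → A)) (hclosed : IsClosed X)
    (hinv : ∀ (g : G), ∀ x ∈ X, shift g x ∈ X)
    (hirr : StronglyIrreducible X) :
    (∀ f : ↥X → ↥X, Continuous f →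
      (∀ (g : G) (x : ↥X),
        f ⟨shift g ↑x, hinv g ↑x x.2⟩ = ⟨shift g ↑(f x), hinv g ↑(f x) (f x).2⟩) →
      (∀ x y : ↥X,
        (∀ U ∈ 𝓤 ↥X, ∃ Ω : Finset G, ∀ g : G, g ∉ Ω →
          ((⟨shift g ↑x, hinv g ↑x x.2⟩ : ↥X), (⟨shift g ↑y, hinv g ↑y y.2⟩ : ↥X)) ∈ U) →
        f x = f y → x = y) →
      Function.Surjective f) ∧
    (∀ f : ↥X → ↥X, Continuous f →
      (∀ (g : G) (x : ↥X),
        f ⟨shift g ↑x, hinv g ↑x x.2⟩ = ⟨shift g ↑(f x), hinv g ↑(f x) (f x).2⟩) →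
      Function.Injective f → Function.Surjective f) := by
  classical
  have main : ∀ f : ↥X → ↥X, Continuous f →
      (∀ (g : G) (x : ↥X),
        f ⟨shift g ↑x, hinv g ↑x x.2⟩ = ⟨shift g ↑(f x), hinv g ↑(f x) (f x).2⟩) →
      (∀ x y : ↥X,
        (∀ U ∈ 𝓤 ↥X, ∃ Ω : Finset G, ∀ g : G, g ∉ Ω →
          ((⟨shift g ↑x, hinv g ↑x x.2⟩ : ↥X), (⟨shift g ↑y, hinv g ↑y y.2⟩ : ↥X)) ∈ U) →
        f x = f y → x = y) →
      Function.Surjective f := by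
    intro f hf hequi hpre
    rcases isEmpty_or_nonempty ↥X with hXe | hXne
    · intro y; exact (hXe.false y).elim
    by_cases hGfin : Finite G
    · have hinj : Function.Injective f := by
        intro x y hxy
        refine hpre x y ?_ hxy
        intro U hU
        haveI := Fintype.ofFinite G
        exact ⟨Finset.univ, fun g hg => absurd (Finset.mem_univ g) hg⟩
      exact Finite.injective_iff_surjective.1 hinj
    haveI : Infinite G := by rwa [not_finite_iff_infinite] at hGfin
    by_contra hsurj
    rw [Function.Surjective] at hsurj
    push_neg at hsurj
    obtain ⟨w, hw⟩ := hsurj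
    obtain ⟨net⟩ := hamen
    set z : G → A := (w : G → A) with hz
    have hzX : z ∈ X := w.2
    haveI : Nonempty A := ⟨z 1⟩
    set Y : Set (G → A) := Subtype.val '' (Set.range f) with hY
    have hYX : Y ⊆ X := by rintro _ ⟨u, hu, rfl⟩; exact u.2
    have hzY : z ∉ Y := by
      rintro ⟨u, ⟨v, rfl⟩, hval⟩
      exact hw v (Subtype.ext hval)
    haveI hdA : DiscreteTopology A := myh_discrete hdisc
    haveI : CompactSpace ↥X := myh_compact hclosed
    have hYcomp : IsCompact Y := ((isCompact_range hf).image continuous_subtype_val)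
    have hYclosed : IsClosed Y := hYcomp.isClosed
    have hYinv : ∀ g : G, ∀ y ∈ Y, shift g y ∈ Y := by
      rintro g _ ⟨u, ⟨v, rfl⟩, rfl⟩
      refine ⟨f ⟨shift g ↑v, hinv g ↑v v.2⟩, ⟨_, rfl⟩, ?_⟩
      rw [hequi g v]
    obtain ⟨Ω₀, hΩ₀⟩ := myh_separation hdisc hYclosed hzY
    have havoid : ∀ y ∈ Y, ∀ g : G, ∃ h ∈ Ω₀, y (g * h) ≠ z h := by
      intro y hy g
      obtain ⟨h, hh, hne⟩ := hΩ₀ (shift g⁻¹ y) (hYinv g⁻¹ y hy)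
      refine ⟨h, hh, ?_⟩
      simpa [shift] using hne
    have hY0 : Y.Nonempty := ⟨↑(f w), f w, ⟨w, rfl⟩, rfl⟩
    have hΩ₀ne : Ω₀.Nonempty := by
      obtain ⟨y0, hy0⟩ := hY0
      obtain ⟨h, hh, _⟩ := havoid y0 hy0 1
      exact ⟨h, hh⟩
    obtain ⟨ω, hω⟩ := hΩ₀ne
    obtain ⟨S₀, hS₀⟩ := myh_memory hdisc hclosed hf
    set S : Finset G := insert 1 S₀ with hSdef
    have h1S : (1 : G) ∈ S := Finset.mem_insert_self 1 S₀
    have hS : ∀ x y : ↥X, (∀ s ∈ S, (x : G → A) s = (y : G → A) s) →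
        (↑(f x) : G → A) 1 = (↑(f y) : G → A) 1 :=
      fun x y h => hS₀ x y (fun s hs => h s (Finset.mem_insert_of_mem hs))
    obtain ⟨Δ₀, hSI₀⟩ := hirr
    set Δ : Finset G := insert 1 Δ₀ with hΔdef
    have h1Δ : (1 : G) ∈ Δ := Finset.mem_insert_self 1 Δ₀
    have hSI : ∀ Ω₁ Ω₂ : Finset G, Disjoint (Ω₁ : Set G) ((Ω₂ : Set G) * (Δ : Set G)) →
        ∀ x₁ ∈ X, ∀ x₂ ∈ X, ∃ x ∈ X, (∀ g ∈ Ω₁, x g = x₁ g) ∧ (∀ g ∈ Ω₂, x g = x₂ g) := by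
      intro Ω₁ Ω₂ hdisj
      apply hSI₀
      refine hdisj.mono_right ?_
      apply Set.mul_subset_mul_left
      rw [hΔdef]
      exact_mod_cast Finset.coe_subset.2 (Finset.subset_insert 1 Δ₀)
    -- constants
    set a : ℕ := Nat.card A with hadef
    have ha : 1 ≤ a := Nat.card_pos
    set c : ℕ := (Ω₀ * Δ).card with hcdef
    have hcmem : ω ∈ Ω₀ * Δ := by
      have := Finset.mul_mem_mul hω h1Δ
      simpa using this
    have hc : 1 ≤ c := Finset.card_pos.2 ⟨ω, hcmem⟩
    set m : ℕ := 2 * a ^ c with hmdef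
    have hm : 0 < m := by positivity
    set K : Finset G := (Ω₀ * Δ * Ω₀⁻¹) ∪ (Ω₀ * Δ * Ω₀⁻¹)⁻¹ with hKdef
    have h1K : (1 : G) ∈ K := by
      apply Finset.mem_union_left
      have := Finset.mul_mem_mul (Finset.mul_mem_mul hω h1Δ) (Finset.inv_mem_inv hω)
      simpa using this
    have hKsymm : ∀ k ∈ K, k⁻¹ ∈ K := by
      intro k hk
      rcases Finset.mem_union.1 hk with hk | hk
      · exact Finset.mem_union_right _ (Finset.inv_mem_inv hk)
      · obtain ⟨bb, hbb, hbbeq⟩ := Finset.mem_inv.1 hk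
        apply Finset.mem_union_left
        rw [← hbbeq, inv_inv]
        exact hbb
    set κ : ℕ := K.card with hκdef
    have hκ : 1 ≤ κ := Finset.card_pos.2 ⟨1, h1K⟩
    set β : ℕ := (Δ * S⁻¹).card with hβdef
    have h1ΔS : (1 : G) ∈ Δ * S⁻¹ := by
      have := Finset.mul_mem_mul h1Δ (Finset.inv_mem_inv h1S)
      simpa using this
    have hβ : 1 ≤ β := Finset.card_pos.2 ⟨1, h1ΔS⟩
    set W : ℕ := κ * m * a * β + c with hWdef
    have hW : 1 ≤ W := by omega
    set Z : ℕ := 2 * W with hZdef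
    have hZ : 0 < Z := by omega
    set R : ℕ := 2 * κ * m + 1 with hRdef
    set Zm : ℕ := max Z R with hZmdef
    -- Følner index selection
    set u : ℕ → G := fun n => (Infinite.natEmbedding G) n with hudef
    have huinj : Function.Injective u := fun _ _ h => (Infinite.natEmbedding G).injective h
    set Vfin : Finset G := ((Ω₀ * Δ) ∪ (Δ * S⁻¹))⁻¹ ∪ (Finset.range R).image u with hVdef
    obtain ⟨j, hcond⟩ := myh_folner_select net Vfin Zm
    set B : Finset G := net.F j with hBdef
    have hBne : B.Nonempty := net.F_nonempty j
    set F : Finset G := B⁻¹ with hFdef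
    have hFcard : F.card = B.card := Finset.card_inv B
    have hFne : F.Nonempty := by
      obtain ⟨x, hx⟩ := hBne
      exact ⟨x⁻¹, Finset.inv_mem_inv hx⟩
    have hcondV : ∀ v ∈ (Ω₀ * Δ) ∪ (Δ * S⁻¹), Z * ((F * {v}) \ F).card < F.card := by
      intro v hv
      have hvV : v⁻¹ ∈ Vfin := Finset.mem_union_left _ (Finset.inv_mem_inv hv)
      have hc1 := hcond v⁻¹ hvV
      have hbr := myh_inv_translate B v
      calc Z * ((F * {v}) \ F).card ≤ Zm * ((F * {v}) \ F).card :=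
            Nat.mul_le_mul_right _ (le_max_left _ _)
        _ = Zm * (((v⁻¹ • B) : Finset G) \ B).card := by rw [hFdef, hbr]
        _ < B.card := hc1
        _ = F.card := hFcard.symm
    have hsize : 2 * κ * m ≤ F.card := by
      by_cases hBR : R ≤ B.card
      · rw [hFcard]; omega
      · exfalso
        push_neg at hBR
        have hzero : ∀ r < R, (((u r • B) : Finset G) \ B).card = 0 := by
          intro r hr
          by_contra hne0
          have h1 : 1 ≤ (((u r • B) : Finset G) \ B).card := Nat.one_le_iff_ne_zero.2 hne0
          have hur : u r ∈ Vfin := Finset.mem_union_right _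
            (Finset.mem_image.2 ⟨r, Finset.mem_range.2 hr, rfl⟩)
          have hc2 := hcond (u r) hur
          have hR : R ≤ Zm := le_max_right Z R
          have h3 : Zm ≤ Zm * (((u r • B) : Finset G) \ B).card :=
            Nat.le_mul_of_pos_right _ h1
          omega
        exact absurd (myh_size B hBne R u huinj hzero) (by omega)
    -- interior and boundaries
    set I : Finset G := F.filter (fun g => (g • (Ω₀ * Δ) : Finset G) ⊆ F) with hIdef
    have hIF : I ⊆ F := Finset.filter_subset _ _
    set e₂ : ℕ := (F \ I).card with he₂def
    have hIe₂ : e₂ + I.card = F.card := Finset.card_sdiff_add_card_eq_card hIF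
    have hZe₂ : Z * e₂ ≤ c * F.card := by
      have hbd := myh_boundary_filter F (Ω₀ * Δ)
      calc Z * e₂ ≤ Z * ∑ d ∈ Ω₀ * Δ, ((F * {d}) \ F).card := Nat.mul_le_mul_left _ hbd
        _ = ∑ d ∈ Ω₀ * Δ, Z * ((F * {d}) \ F).card := by rw [Finset.mul_sum]
        _ ≤ ∑ _d ∈ Ω₀ * Δ, F.card :=
            Finset.sum_le_sum (fun d hd => le_of_lt (hcondV d (Finset.mem_union_left _ hd)))
        _ = c * F.card := by rw [Finset.sum_const, smul_eq_mul]
    set b : ℕ := ((F * (Δ * S⁻¹)) \ F).card with hbdef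
    have hZb : Z * b ≤ β * F.card := by
      have hbd := myh_boundary_mul F (Δ * S⁻¹)
      calc Z * b ≤ Z * ∑ v ∈ Δ * S⁻¹, ((F * {v}) \ F).card := Nat.mul_le_mul_left _ hbd
        _ = ∑ v ∈ Δ * S⁻¹, Z * ((F * {v}) \ F).card := by rw [Finset.mul_sum]
        _ ≤ ∑ _v ∈ Δ * S⁻¹, F.card :=
            Finset.sum_le_sum (fun v hv => le_of_lt (hcondV v (Finset.mem_union_right _ hv)))
        _ = β * F.card := by rw [Finset.sum_const, smul_eq_mul]
    -- greedy family of separated tiles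
    obtain ⟨J', hJI, hJsep, hJcard⟩ := myh_greedy K h1K hKsymm I
    set N : ℕ := J'.card with hNdef
    set t : ℕ := N / m with htdef
    have harith : κ * (m * (a * b + 1)) ≤ I.card := by
      have h1 : Z * (κ * m * (a * b)) ≤ (κ * m * a * β) * F.card := by
        calc Z * (κ * m * (a * b)) = (κ * m * a) * (Z * b) := by ring
          _ ≤ (κ * m * a) * (β * F.card) := Nat.mul_le_mul_left _ hZb
          _ = (κ * m * a * β) * F.card := by ring
      have h2 : Z * (κ * m) ≤ W * F.card := by
        calc Z * (κ * m) = W * (2 * κ * m) := by rw [hZdef]; ring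
          _ ≤ W * F.card := Nat.mul_le_mul_left _ hsize
      have hZsum : Z * (κ * m * (a * b) + κ * m + e₂) ≤ Z * F.card := by
        calc Z * (κ * m * (a * b) + κ * m + e₂)
            = Z * (κ * m * (a * b)) + Z * (κ * m) + Z * e₂ := by ring
          _ ≤ (κ * m * a * β) * F.card + W * F.card + c * F.card := by
              exact Nat.add_le_add (Nat.add_le_add h1 h2) hZe₂
          _ = Z * F.card := by rw [hZdef, hWdef]; ring
      have hle : κ * m * (a * b) + κ * m + e₂ ≤ F.card :=
        Nat.le_of_mul_le_mul_left hZsum hZ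
      have hexp : κ * (m * (a * b + 1)) = κ * m * (a * b) + κ * m := by ring
      omega
    have hN : m * (a * b + 1) ≤ N := by
      have h1 : κ * (m * (a * b + 1)) ≤ κ * N := by
        calc κ * (m * (a * b + 1)) ≤ I.card := harith
          _ ≤ N * κ := hJcard
          _ = κ * N := Nat.mul_comm N κ
      exact Nat.le_of_mul_le_mul_left h1 (by omega)
    have habt : a * b + 1 ≤ t := by
      rw [htdef, Nat.le_div_iff_mul_le hm, mul_comm]
      exact hN
    -- tile selection
    have hmt : t * m ≤ N := Nat.div_mul_le_self N m
    set gs : Fin t × Fin m → G :=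
      fun i => ↑(J'.equivFin.symm (Fin.castLE hmt (finProdFinEquiv i))) with hgs
    have hgsmem : ∀ i, gs i ∈ J' := fun i => (J'.equivFin.symm _).2
    have hgsinj : Function.Injective gs := by
      intro i i' hEq
      have h1 : J'.equivFin.symm (Fin.castLE hmt (finProdFinEquiv i))
          = J'.equivFin.symm (Fin.castLE hmt (finProdFinEquiv i')) := Subtype.ext hEq
      have h2 := J'.equivFin.symm.injective h1
      have h3 : finProdFinEquiv i = finProdFinEquiv i' := by
        have h4 := congrArg Fin.val h2
        simp only [Fin.coe_castLE] at h4
        exact Fin.ext h4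
      exact finProdFinEquiv.injective h3
    have hgsF : ∀ i, (gs i • (Ω₀ * Δ) : Finset G) ⊆ F := by
      intro i
      have hmem := hJI (hgsmem i)
      rw [hIdef, Finset.mem_filter] at hmem
      exact hmem.2
    have hsep : ∀ i i', i ≠ i' →
        Disjoint ((gs i • Ω₀ : Finset G) : Set G) ((gs i' • (Ω₀ * Δ) : Finset G) : Set G) := by
      intro i i' hne
      apply myh_sep_disjoint
      rw [← hKdef]
      exact hJsep (gs i) (hgsmem i) (gs i') (hgsmem i') (fun h => hne (hgsinj h))
    -- counting
    haveI hfinP := myh_finite_pat z F X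
    have hPne : Nonempty ↥(myres z F '' X) := ⟨⟨myres z F z, z, hzX, rfl⟩⟩
    have h1c := myh_count_preinj hdisc hclosed hinv hSI hequi hS hpre hzX F
    rw [← hY] at h1c
    have hFsub : F ⊆ F * (Δ * S⁻¹) := by
      intro g hg
      have := Finset.mul_mem_mul hg h1ΔS
      simpa using this
    have h2c := myh_count_restrict z hFsub Y
    have h3c := myh_count_tiles hdisc hclosed hinv h1Δ hSI hYX hzX havoid F t m gs hgsF hsep
    rw [← hadef] at h2c h3c
    rw [← hcdef] at h3c
    rw [← hbdef] at h2c
    set P : ℕ := Nat.card ↥(myres z F '' X) with hPdef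
    set Q : ℕ := Nat.card ↥(myres z F '' Y) with hQdef
    have hP1 : 1 ≤ P := Nat.card_pos
    have hchain : P * m ^ t ≤ (P * (a ^ c) ^ t) * a ^ b := by
      calc P * m ^ t ≤ Nat.card ↥(myres z (F * (Δ * S⁻¹)) '' Y) * m ^ t :=
            Nat.mul_le_mul_right _ h1c
        _ ≤ (Q * a ^ b) * m ^ t := Nat.mul_le_mul_right _ h2c
        _ = (Q * m ^ t) * a ^ b := by ring
        _ ≤ (P * (a ^ c) ^ t) * a ^ b := Nat.mul_le_mul_right _ h3c
    have hmpow : m ^ t = 2 ^ t * (a ^ c) ^ t := by rw [hmdef, mul_pow]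
    have h2t : 2 ^ t ≤ a ^ b := by
      have h1 : P * (2 ^ t * (a ^ c) ^ t) ≤ P * ((a ^ c) ^ t * a ^ b) := by
        calc P * (2 ^ t * (a ^ c) ^ t) = P * m ^ t := by rw [hmpow]
          _ ≤ (P * (a ^ c) ^ t) * a ^ b := hchain
          _ = P * ((a ^ c) ^ t * a ^ b) := by ring
      have h2 := Nat.le_of_mul_le_mul_left h1 (by omega : 0 < P)
      have h3 : 2 ^ t * (a ^ c) ^ t ≤ a ^ b * (a ^ c) ^ t := by
        calc 2 ^ t * (a ^ c) ^ t ≤ (a ^ c) ^ t * a ^ b := h2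
          _ = a ^ b * (a ^ c) ^ t := by ring
      exact Nat.le_of_mul_le_mul_right h3 (by positivity)
    have hfin : t ≤ a * b := by
      have h1 : a ^ b ≤ 2 ^ (a * b) := by
        calc a ^ b ≤ (2 ^ a) ^ b := Nat.pow_le_pow_left (le_of_lt (Nat.lt_two_pow_self (n := a))) b
          _ = 2 ^ (a * b) := by rw [← pow_mul]
      have h2 : (2 : ℕ) ^ t ≤ 2 ^ (a * b) := le_trans h2t h1
      exact (Nat.pow_le_pow_iff_right (by omega : 1 < 2)).1 h2
    omega
  exact ⟨main, fun f hf hequi hinj => main f hf hequi (fun x y _ hxy => hinj hxy)⟩
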